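/- (Lemma 4.2(2)) If an nfc-transducer T = (Q, V, Δ, q₀) is consistent with a BPA system G = (V, Act, R), then the equivalence ≡^T (defined by α ≡^T β iff T(α) = T(β)) is a branching bisimulation in the LTS L_G; consequently T(α) = T(β) implies α ~ β in L_G. -/

import Mathlib

/-! Common definitions: labelled transition systems, branching bisimulation,
branching bisimilarity, silent states, class-change norm, BPA systems,
right-to-left finite transducers. -/

/-- A τ-path `t = t₀ →τ t₁ →τ ⋯ →τ t_k` in which every state after `t₀`
is related to `s` by `B`. -/
inductive TauSeq {S Act : Type} (tr : S → Act → S → Prop) (τ : Act)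
    (B : S → S → Prop) (s : S) : S → S → Prop
  | refl (t : S) : TauSeq tr τ B s t t
  | step {t t' t'' : S} : tr t τ t' → B s t' → TauSeq tr τ B s t' t'' →
      TauSeq tr τ B s t t''

/-- `B` is a branching bisimulation in the LTS given by `tr` with silent action `τ`. -/
def IsBranchingBisim {S Act : Type} (tr : S → Act → S → Prop) (τ : Act)
    (B : S → S → Prop) : Prop :=
  ∀ s t, B s t →
    (∀ a s', tr s a s' →
      ((a = τ ∧ B s' t) ∨
        ∃ tk t', TauSeq tr τ B s t tk ∧ tr tk a t' ∧ B s' t')) ∧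
    (∀ a t', tr t a t' →
      ((a = τ ∧ B s t') ∨
        ∃ sk s', TauSeq tr τ (fun u v => B v u) t s sk ∧ tr sk a s' ∧ B s' t'))

/-- Branching bisimilarity: `s ~ t` iff some branching bisimulation contains `(s,t)`. -/
def BBisim {S Act : Type} (tr : S → Act → S → Prop) (τ : Act) (s t : S) : Prop :=
  ∃ B, IsBranchingBisim tr τ B ∧ B s t

/-- `Steps tr s w t`: there is a path from `s` to `t` labelled by the word `w`. -/
inductive Steps {S Act : Type} (tr : S → Act → S → Prop) : S → List Act → S → Prop
  | refl (s : S) : Steps tr s [] s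
  | step {s : S} {a : Act} {s' : S} {w : List Act} {t : S} :
      tr s a s' → Steps tr s' w t → Steps tr s (a :: w) t

/-- A state is silent if only τ-labelled words can be performed from it. -/
def SilentState {S Act : Type} (tr : S → Act → S → Prop) (τ : Act) (s : S) : Prop :=
  ∀ w s', Steps tr s w s' → ∀ a ∈ w, a = τ

/-- A τ-path in which no transition is class-changing (each step stays in the same
`~`-class). -/
inductive TauNC {S Act : Type} (tr : S → Act → S → Prop) (τ : Act) : S → S → Prop
  | refl (t : S) : TauNC tr τ t t
  | step {t t' t'' : S} : tr t τ t' → BBisim tr τ t t' → TauNC tr τ t' t'' →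
      TauNC tr τ t t''

/-- `CCPath tr τ s n t`: there is a path from `s` to `t` containing exactly `n`
class-changing transitions. -/
inductive CCPath {S Act : Type} (tr : S → Act → S → Prop) (τ : Act) : S → ℕ → S → Prop
  | refl (s : S) : CCPath tr τ s 0 s
  | stepEq {s : S} {a : Act} {s' : S} {n : ℕ} {t : S} :
      tr s a s' → BBisim tr τ s s' → CCPath tr τ s' n t → CCPath tr τ s n t
  | stepNe {s : S} {a : Act} {s' : S} {n : ℕ} {t : S} :
      tr s a s' → ¬ BBisim tr τ s s' → CCPath tr τ s' n t → CCPath tr τ s (n + 1) t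

/-- The class-change norm: the least number of class-changing transitions on a path
to a silent state; `⊤` (ω) if no silent state is reachable. -/
noncomputable def ccNorm {S Act : Type} (tr : S → Act → S → Prop) (τ : Act) (s : S) : ℕ∞ :=
  sInf {n : ℕ∞ | ∃ ℓ : ℕ, n = (ℓ : ℕ∞) ∧ ∃ t, CCPath tr τ s ℓ t ∧ SilentState tr τ t}

/-- A BPA system: a finite set of rules `A →a α` (a context-free grammar in
Greibach normal form, no starting variable). -/
structure BPA (V Act : Type) where
  rules : Finset (V × Act × List V)

/-- The transition relation of the LTS `L_G` associated with a BPA system `G`: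
`Aβ →a γβ` whenever `A →a γ` is a rule. -/
def BPA.tr {V Act : Type} (G : BPA V Act) : List V → Act → List V → Prop :=
  fun s a t => ∃ (A : V) (γ β : List V), (A, a, γ) ∈ G.rules ∧ s = A :: β ∧ t = γ ++ β

/-- The (standard, syntactic) norm of a process: the length of a shortest word
leading to the empty process; `⊤` (ω) if there is none. -/
noncomputable def BPA.norm {V Act : Type} (G : BPA V Act) (α : List V) : ℕ∞ :=
  sInf {n : ℕ∞ | ∃ w : List Act, n = (w.length : ℕ∞) ∧ Steps G.tr α w []}

/-- A BPA system is normed if every variable has a finite norm. -/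
def BPA.Normed {V Act : Type} (G : BPA V Act) : Prop :=
  ∀ A : V, G.norm [A] ≠ ⊤

/-- The transition relation of `L_{G,R}`: as `L_G`, but all outgoing transitions of
states in `R*` are removed. -/
def BPA.trR {V Act : Type} (G : BPA V Act) (R : Set V) : List V → Act → List V → Prop :=
  fun s a t => G.tr s a t ∧ ¬ (∀ X ∈ s, X ∈ R)

/-- `R_γ`: the set of variables redundant w.r.t. `γ`, i.e. those `X` with `Xγ ~ γ`. -/
def RedSet {V Act : Type} (G : BPA V Act) (τ : Act) (γ : List V) : Set V :=
  {X : V | BBisim G.tr τ (X :: γ) γ}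

/-- `α` is a redundancy-free prefix of `αγ`: it cannot be written as `δXβ` with
`Xβγ ~ βγ`. -/
def RedFreePrefix {V Act : Type} (G : BPA V Act) (τ : Act) (α γ : List V) : Prop :=
  ¬ ∃ (δ : List V) (X : V) (β : List V),
      α = δ ++ X :: β ∧ BBisim G.tr τ (X :: (β ++ γ)) (β ++ γ)

/-- A finite-state transducer reading (and writing) from right to left. -/
structure Transducer (Q V : Type) where
  delta : Q → V → Q × List V
  q0 : Q

/-- Running the transducer on an input string, right to left:
`T.run α q = (q', β)` means `q' ⇐α|β= q`. -/
def Transducer.run {Q V : Type} (T : Transducer Q V) : List V → Q → Q × List V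
  | [], q => (q, [])
  | A :: α, q =>
      let p := T.run α q
      ((T.delta p.1 A).1, (T.delta p.1 A).2 ++ p.2)

/-- `T_q(α)`: the output of `T` on input `α`, started in state `q`. -/
def Transducer.out {Q V : Type} (T : Transducer Q V) (q : Q) (α : List V) : List V :=
  (T.run α q).2

/-- `q`-normal forms: `ε ∈ NF_q`, and `αA ∈ NF_q` iff `A` is a `q`-prime and
`α` is a `q'`-normal form where `q' ⇐A|A= q`. -/
inductive Transducer.NF {Q V : Type} (T : Transducer Q V) : Q → List V → Prop
  | nil (q : Q) : Transducer.NF T q []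
  | snoc {q : Q} {A : V} {α : List V} :
      (T.delta q A).2 = [A] → Transducer.NF T (T.delta q A).1 α →
      Transducer.NF T q (α ++ [A])

/-- A normal-form-computing (nfc) transducer: each `T_q(A)` is a `q`-normal form,
and `q' ⇐A|γ= q` implies `q' ⇐γ|γ= q`. -/
def Transducer.IsNFC {Q V : Type} (T : Transducer Q V) : Prop :=
  ∀ (q : Q) (A : V),
    Transducer.NF T q (T.delta q A).2 ∧ T.run (T.delta q A).2 q = T.delta q A

/-- A τ-path in `L_G` along which the `T_q`-output stays constant. -/
inductive ConstTauSeq {Q V Act : Type} (tr : List V → Act → List V → Prop) (τ : Act)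
    (T : Transducer Q V) (q : Q) : List V → List V → Prop
  | refl (α : List V) : ConstTauSeq tr τ T q α α
  | step {α α' α'' : List V} : tr α τ α' → T.out q α' = T.out q α →
      ConstTauSeq tr τ T q α' α'' → ConstTauSeq tr τ T q α α''

/-- The long move `α ⇒a_q β`. -/
def BigStep {Q V Act : Type} (G : BPA V Act) (τ : Act) (T : Transducer Q V) (q : Q)
    (α : List V) (a : Act) (β : List V) : Prop :=
  (a = τ ∧ β = T.out q α) ∨
  ∃ αk β', ConstTauSeq G.tr τ T q α αk ∧ G.tr αk a β' ∧ β = T.out q β'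

/-- The equivalence `α₁ ≈_q α₂`: the same long moves are available. -/
def TApprox {Q V Act : Type} (G : BPA V Act) (τ : Act) (T : Transducer Q V) (q : Q)
    (α₁ α₂ : List V) : Prop :=
  ∀ a β, BigStep G τ T q α₁ a β ↔ BigStep G τ T q α₂ a β

/-- Consistency of an nfc-transducer with a BPA system (Definition 4.1). -/
def ConsistentWith {Q V Act : Type} (T : Transducer Q V) (G : BPA V Act) (τ : Act) : Prop :=
  (∀ A : V, T.out T.q0 [A] = [] → TApprox G τ T T.q0 [A] []) ∧
  (∀ (q : Q) (A : V), T.out q [A] ≠ [] → TApprox G τ T q [A] (T.out q [A])) ∧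
  (∀ (q : Q) (A C : V), T.out q [A, C] = [C] → T.out q [C] = [C] →
    TApprox G τ T q [A, C] [C])

/-! ### Auxiliary development for the proof -/

namespace Lemma42Aux

variable {Q V Act : Type}

/-- Composition of transducer runs. -/
lemma run_append (T : Transducer Q V) (γ ρ : List V) (q : Q) :
    T.run (γ ++ ρ) q = ((T.run γ (T.run ρ q).1).1,
      (T.run γ (T.run ρ q).1).2 ++ (T.run ρ q).2) := by
  induction γ with
  | nil => simp [Transducer.run]
  | cons A γ ih => simp [Transducer.run, ih, List.append_assoc]

lemma out_append (T : Transducer Q V) (γ ρ : List V) (q : Q) :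
    T.out q (γ ++ ρ) = T.out (T.run ρ q).1 γ ++ T.out q ρ := by
  unfold Transducer.out; rw [run_append]

lemma st_append (T : Transducer Q V) (γ ρ : List V) (q : Q) :
    (T.run (γ ++ ρ) q).1 = (T.run γ (T.run ρ q).1).1 := by
  rw [run_append]

lemma out_single (T : Transducer Q V) (q : Q) (A : V) :
    T.out q [A] = (T.delta q A).2 := by
  simp [Transducer.out, Transducer.run]

lemma tr_def {G : BPA V Act} {s t : List V} {a : Act} :
    G.tr s a t ↔ ∃ A γ β, (A, a, γ) ∈ G.rules ∧ s = A :: β ∧ t = γ ++ β := Iff.rfl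

lemma tr_append {G : BPA V Act} {γ δ : List V} {a : Act} (h : G.tr γ a δ) (ρ : List V) :
    G.tr (γ ++ ρ) a (δ ++ ρ) := by
  obtain ⟨A, γ', β, hm, rfl, rfl⟩ := h
  exact ⟨A, γ', β ++ ρ, hm, by simp, by simp⟩

lemma tr_append_inv {G : BPA V Act} {γ ρ β : List V} {a : Act}
    (h : G.tr (γ ++ ρ) a β) (hγ : γ ≠ []) :
    ∃ δ, G.tr γ a δ ∧ β = δ ++ ρ := by
  obtain ⟨A, γ', β', hm, he, rfl⟩ := h
  cases γ with
  | nil => exact absurd rfl hγ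
  | cons X γ₀ =>
    rw [List.cons_append, List.cons.injEq] at he
    obtain ⟨rfl, rfl⟩ := he
    exact ⟨γ' ++ γ₀, ⟨X, γ', γ₀, hm, rfl, rfl⟩, by simp⟩

lemma cts_out {tr' : List V → Act → List V → Prop} {τ : Act} {T : Transducer Q V}
    {q : Q} {s t : List V} (h : ConstTauSeq tr' τ T q s t) : T.out q t = T.out q s := by
  induction h with
  | refl => rfl
  | step _ h2 _ ih => exact ih.trans h2

lemma cts_trans {tr' : List V → Act → List V → Prop} {τ : Act} {T : Transducer Q V}
    {q : Q} {s t u : List V} (h1 : ConstTauSeq tr' τ T q s t)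
    (h2 : ConstTauSeq tr' τ T q t u) : ConstTauSeq tr' τ T q s u := by
  induction h1 with
  | refl => exact h2
  | step ha hb _ ih => exact ConstTauSeq.step ha hb (ih h2)

lemma cts_lift {G : BPA V Act} {τ : Act} {T : Transducer Q V} {q : Q} {ρ γ δ : List V}
    (h : ConstTauSeq G.tr τ T (T.run ρ q).1 γ δ) :
    ConstTauSeq G.tr τ T q (γ ++ ρ) (δ ++ ρ) := by
  induction h with
  | refl => exact ConstTauSeq.refl _
  | step htr hout _ ih =>
    exact ConstTauSeq.step (tr_append htr ρ) (by rw [out_append, out_append, hout]) ih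

/-- Splitting a constant-output τ-path from `γ ++ ρ`. -/
lemma split {G : BPA V Act} {τ : Act} {T : Transducer Q V} {q : Q} {ρ : List V}
    {s αk : List V} (h : ConstTauSeq G.tr τ T q s αk) :
    ∀ γ, s = γ ++ ρ →
      (∃ δ, δ ≠ [] ∧ αk = δ ++ ρ ∧ ConstTauSeq G.tr τ T (T.run ρ q).1 γ δ) ∨
      (ConstTauSeq G.tr τ T (T.run ρ q).1 γ [] ∧ ConstTauSeq G.tr τ T q ρ αk) := by
  induction h with
  | refl s =>
    intro γ hγ
    cases γ with
    | nil => right; exact ⟨ConstTauSeq.refl _, hγ ▸ ConstTauSeq.refl _⟩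
    | cons X γ₀ => left; exact ⟨X :: γ₀, by simp, hγ, ConstTauSeq.refl _⟩
  | @step α α' α'' htr hout hrest ih =>
    intro γ hγ
    subst hγ
    cases γ with
    | nil => right; exact ⟨ConstTauSeq.refl _, ConstTauSeq.step htr hout hrest⟩
    | cons X γ₀ =>
      obtain ⟨δ₁, htrγ, hα'⟩ := tr_append_inv htr (by simp)
      have hout' : T.out (T.run ρ q).1 δ₁ = T.out (T.run ρ q).1 (X :: γ₀) := by
        rw [hα', out_append] at hout
        rw [show (X :: γ₀) ++ ρ = (X :: γ₀) ++ ρ from rfl, out_append] at hout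
        exact List.append_cancel_right hout
      rcases ih δ₁ hα' with ⟨δ, hne, heq, hseq⟩ | ⟨hseq, hrest'⟩
      · left; exact ⟨δ, hne, heq, ConstTauSeq.step htrγ hout' hseq⟩
      · right; exact ⟨ConstTauSeq.step htrγ hout' hseq, hrest'⟩

/-- Lifting a long move along a fixed suffix. -/
lemma bigstep_lift {G : BPA V Act} {τ : Act} {T : Transducer Q V} {q : Q}
    {ρ γ σ : List V} {a : Act} (h : BigStep G τ T (T.run ρ q).1 γ a σ) :
    BigStep G τ T q (γ ++ ρ) a (σ ++ T.out q ρ) := by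
  rcases h with ⟨ha, rfl⟩ | ⟨δk, δ', hseq, htr, rfl⟩
  · left; exact ⟨ha, by rw [out_append]⟩
  · right; exact ⟨δk ++ ρ, δ' ++ ρ, cts_lift hseq, tr_append htr ρ, by rw [out_append]⟩

lemma tapprox_symm {G : BPA V Act} {τ : Act} {T : Transducer Q V} {q : Q}
    {α β : List V} (h : TApprox G τ T q α β) : TApprox G τ T q β α :=
  fun a γ => (h a γ).symm

lemma tapprox_trans {G : BPA V Act} {τ : Act} {T : Transducer Q V} {q : Q}
    {α β γ : List V} (h1 : TApprox G τ T q α β) (h2 : TApprox G τ T q β γ) :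
    TApprox G τ T q α γ :=
  fun a δ => (h1 a δ).trans (h2 a δ)

/-- One direction of the right-append congruence (heads equivalent with equal,
nonempty outputs). -/
lemma approx_append_dir {G : BPA V Act} {τ : Act} {T : Transducer Q V} {q : Q}
    {ρ γ₁ γ₂ : List V}
    (h12 : TApprox G τ T (T.run ρ q).1 γ₁ γ₂)
    (hout : T.out (T.run ρ q).1 γ₁ = T.out (T.run ρ q).1 γ₂)
    (hne : T.out (T.run ρ q).1 γ₁ ≠ []) :
    ∀ a β, BigStep G τ T q (γ₁ ++ ρ) a β → BigStep G τ T q (γ₂ ++ ρ) a β := by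
  intro a β h
  rcases h with ⟨ha, rfl⟩ | ⟨αk, β', hseq, htr, rfl⟩
  · left; exact ⟨ha, by rw [out_append, out_append, hout]⟩
  · rcases split hseq γ₁ rfl with ⟨δ, hδ, rfl, hseqq⟩ | ⟨hnil, _⟩
    · obtain ⟨δ', htrδ, rfl⟩ := tr_append_inv htr hδ
      have hb : BigStep G τ T (T.run ρ q).1 γ₁ a (T.out (T.run ρ q).1 δ') :=
        Or.inr ⟨δ, δ', hseqq, htrδ, rfl⟩
      have := bigstep_lift ((h12 a _).1 hb)
      rwa [← out_append] at this
    · exact absurd (cts_out hnil).symm hne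

/-- Right-append congruence. -/
lemma approx_append {G : BPA V Act} {τ : Act} {T : Transducer Q V} {q : Q}
    {ρ γ₁ γ₂ : List V}
    (h12 : TApprox G τ T (T.run ρ q).1 γ₁ γ₂)
    (hout : T.out (T.run ρ q).1 γ₁ = T.out (T.run ρ q).1 γ₂)
    (hne : T.out (T.run ρ q).1 γ₁ ≠ []) :
    TApprox G τ T q (γ₁ ++ ρ) (γ₂ ++ ρ) :=
  fun a β => ⟨approx_append_dir h12 hout hne a β,
    approx_append_dir (tapprox_symm h12) hout.symm (hout ▸ hne) a β⟩

/-- One direction of the tail-replacement congruence. -/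
lemma approx_tail_dir {G : BPA V Act} {τ : Act} {T : Transducer Q V} {q : Q}
    {α₂ α₂' γ : List V}
    (h : TApprox G τ T q α₂ α₂')
    (hout : T.out q α₂ = T.out q α₂')
    (hst : (T.run α₂ q).1 = (T.run α₂' q).1) :
    ∀ a β, BigStep G τ T q (γ ++ α₂) a β → BigStep G τ T q (γ ++ α₂') a β := by
  intro a β hb
  rcases hb with ⟨ha, rfl⟩ | ⟨αk, β', hseq, htr, rfl⟩
  · left; exact ⟨ha, by rw [out_append, out_append, ← hst, hout]⟩
  · rcases split hseq γ rfl with ⟨δ, hδ, rfl, hseqq⟩ | ⟨hnil, hrest⟩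
    · obtain ⟨δ', htrδ, rfl⟩ := tr_append_inv htr hδ
      right
      refine ⟨δ ++ α₂', δ' ++ α₂', cts_lift (hst ▸ hseqq), tr_append htrδ _, ?_⟩
      rw [out_append, out_append, ← hst, hout]
    · have hγ0 : T.out (T.run α₂ q).1 γ = [] := (cts_out hnil).symm
      have hb₂ : BigStep G τ T q α₂ a (T.out q β') := Or.inr ⟨αk, β', hrest, htr, rfl⟩
      rcases (h a _).1 hb₂ with ⟨ha, hβ⟩ | ⟨αk', β'', hseq', htr', hβ⟩
      · left
        refine ⟨ha, ?_⟩
        rw [out_append, ← hst, hγ0, List.nil_append, hβ]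
      · right
        have h1 : ConstTauSeq G.tr τ T q (γ ++ α₂') α₂' := by
          have := cts_lift (ρ := α₂') (q := q) (hst ▸ hnil)
          simpa using this
        exact ⟨αk', β'', cts_trans h1 hseq', htr', hβ⟩

/-- Tail-replacement congruence. -/
lemma approx_tail {G : BPA V Act} {τ : Act} {T : Transducer Q V} {q : Q}
    {α₂ α₂' : List V} (γ : List V)
    (h : TApprox G τ T q α₂ α₂')
    (hout : T.out q α₂ = T.out q α₂')
    (hst : (T.run α₂ q).1 = (T.run α₂' q).1) :
    TApprox G τ T q (γ ++ α₂) (γ ++ α₂') :=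
  fun a β => ⟨approx_tail_dir h hout hst a β,
    approx_tail_dir (tapprox_symm h) hout.symm hst.symm a β⟩

lemma nf_out_eq {T : Transducer Q V} {q : Q} {ρ : List V} (h : T.NF q ρ) :
    T.out q ρ = ρ := by
  induction h with
  | nil => rfl
  | @snoc q A α h1 _ ih =>
    rw [out_append, out_single, h1]
    have : (T.run [A] q).1 = (T.delta q A).1 := by simp [Transducer.run]
    rw [this, ih]

lemma run_out {T : Transducer Q V} (hnfc : T.IsNFC) (q : Q) (α : List V) :
    T.run (T.out q α) q = T.run α q := by
  induction α with
  | nil => rfl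
  | cons A α ih =>
    have hA : T.out q (A :: α) = (T.delta (T.run α q).1 A).2 ++ T.out q α := by
      simp [Transducer.out, Transducer.run]
    rw [hA, run_append, ih, (hnfc (T.run α q).1 A).2]
    simp [Transducer.run]

lemma nf_append {T : Transducer Q V} {q : Q} {β : List V} (hβ : T.NF q β) :
    ∀ γ, T.NF (T.run β q).1 γ → T.NF q (γ ++ β) := by
  induction hβ with
  | nil => intro γ hγ; simpa [Transducer.run] using hγ
  | @snoc q A α h1 _ ih =>
    intro γ hγ
    rw [st_append] at hγ
    have hst1 : (T.run [A] q).1 = (T.delta q A).1 := by simp [Transducer.run]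
    rw [hst1] at hγ
    have := Transducer.NF.snoc h1 (ih γ hγ)
    rwa [List.append_assoc] at this

lemma nf_out {T : Transducer Q V} (hnfc : T.IsNFC) (q : Q) (α : List V) :
    T.NF q (T.out q α) := by
  induction α with
  | nil => exact Transducer.NF.nil q
  | cons A α ih =>
    have hA : T.out q (A :: α) = (T.delta (T.run α q).1 A).2 ++ T.out q α := by
      simp [Transducer.out, Transducer.run]
    rw [hA]
    exact nf_append ih _ (by rw [run_out hnfc]; exact (hnfc _ A).1)

lemma nf_cons_inv {T : Transducer Q V} {q : Q} {ρ : List V} (h : T.NF q ρ) :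
    ∀ C ρ', ρ = C :: ρ' → T.NF q ρ' ∧ (T.delta (T.run ρ' q).1 C).2 = [C] := by
  induction h with
  | nil => intro C ρ' h; simp at h
  | @snoc q A α h1 h2 ih =>
    intro C ρ' he
    cases α with
    | nil =>
      simp at he
      obtain ⟨rfl, rfl⟩ := he
      exact ⟨Transducer.NF.nil q, by simpa [Transducer.run] using h1⟩
    | cons D α₀ =>
      rw [List.cons_append, List.cons.injEq] at he
      obtain ⟨hDC, rfl⟩ := he
      subst hDC
      obtain ⟨hnf₀, hd⟩ := ih D α₀ rfl
      refine ⟨Transducer.NF.snoc h1 hnf₀, ?_⟩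
      rw [st_append]
      have hst1 : (T.run [A] q).1 = (T.delta q A).1 := by simp [Transducer.run]
      rw [hst1]
      exact hd

/-- The central lemma (Lemma 4.2(1)): `α ≈_{q₀} T(α)`. -/
lemma approx_out {G : BPA V Act} {τ : Act} {T : Transducer Q V}
    (hnfc : T.IsNFC) (hcons : ConsistentWith T G τ) :
    ∀ α, TApprox G τ T T.q0 α (T.out T.q0 α) := by
  intro α
  induction α with
  | nil => exact fun a β => Iff.rfl
  | cons A α₂ ih =>
    have hrunout := run_out hnfc T.q0 α₂
    have hst : (T.run α₂ T.q0).1 = (T.run (T.out T.q0 α₂) T.q0).1 := by rw [hrunout]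
    have houtρ : T.out T.q0 α₂ = T.out T.q0 (T.out T.q0 α₂) :=
      (congrArg Prod.snd hrunout).symm
    have step1 : TApprox G τ T T.q0 (A :: α₂) (A :: T.out T.q0 α₂) := by
      have := approx_tail [A] ih houtρ hst
      simpa using this
    have houtA : T.out T.q0 (A :: α₂) = (T.delta (T.run α₂ T.q0).1 A).2 ++ T.out T.q0 α₂ := by
      simp [Transducer.out, Transducer.run]
    refine tapprox_trans step1 ?_
    by_cases hA : (T.delta (T.run α₂ T.q0).1 A).2 = []
    · rw [houtA, hA, List.nil_append]
      rcases hρ : T.out T.q0 α₂ with _ | ⟨C, ρ'⟩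
      · have hq : (T.run α₂ T.q0).1 = T.q0 := by
          rw [← hrunout, hρ]
          rfl
        have h1 : T.out T.q0 [A] = [] := by
          rw [out_single, ← hq, hA]
        simpa [hρ] using hcons.1 A h1
      · have hnf : T.NF T.q0 (C :: ρ') := hρ ▸ nf_out hnfc T.q0 α₂
        obtain ⟨hnf', hdC⟩ := nf_cons_inv hnf C ρ' rfl
        have hq2 : (T.run α₂ T.q0).1 = (T.delta (T.run ρ' T.q0).1 C).1 := by
          rw [← hrunout, hρ]
          simp [Transducer.run]
        have hC1 : T.out (T.run ρ' T.q0).1 [C] = [C] := by rw [out_single, hdC]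
        have hAC : T.out (T.run ρ' T.q0).1 [A, C] = [C] := by
          show (T.run [A, C] (T.run ρ' T.q0).1).2 = [C]
          simp only [Transducer.run]
          rw [hdC, ← hq2, hA]
          rfl
        have happ := hcons.2.2 (T.run ρ' T.q0).1 A C hAC hC1
        have hE := approx_append (ρ := ρ') (q := T.q0) (γ₁ := [A, C]) (γ₂ := [C])
          happ (hAC.trans hC1.symm) (by rw [hAC]; simp)
        simpa using hE
    · have hq2' : (T.run (T.out T.q0 α₂) T.q0).1 = (T.run α₂ T.q0).1 :=
        congrArg Prod.fst hrunout
      have hne1 : T.out (T.run α₂ T.q0).1 [A] ≠ [] := by rw [out_single]; exact hA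
      have hcons2 := hcons.2.1 (T.run α₂ T.q0).1 A hne1
      rw [out_single] at hcons2
      have hσnf : T.NF (T.run α₂ T.q0).1 (T.delta (T.run α₂ T.q0).1 A).2 := (hnfc _ A).1
      have hσout := nf_out_eq hσnf
      have hE := approx_append (ρ := T.out T.q0 α₂) (q := T.q0)
        (γ₁ := [A]) (γ₂ := (T.delta (T.run α₂ T.q0).1 A).2)
        (by rw [hq2']; exact hcons2)
        (by rw [hq2', out_single, hσout])
        (by rw [hq2', out_single]; exact hA)
      rw [houtA]
      simpa using hE

lemma tauseq_of_cts {G : BPA V Act} {τ : Act} {T : Transducer Q V}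
    {α β βk : List V} (h : ConstTauSeq G.tr τ T T.q0 β βk)
    (hβα : T.out T.q0 β = T.out T.q0 α) :
    TauSeq G.tr τ (fun u v => T.out T.q0 u = T.out T.q0 v) α β βk := by
  induction h with
  | refl => exact TauSeq.refl _
  | step htr hout _ ih =>
    exact TauSeq.step htr (hout.trans hβα).symm (ih (hout.trans hβα))

lemma tauseq_mono {S A : Type} {tr : S → A → S → Prop} {τ : A}
    {B₁ B₂ : S → S → Prop} {s t u : S} (h : TauSeq tr τ B₁ s t u)
    (himp : ∀ x, B₁ s x → B₂ s x) : TauSeq tr τ B₂ s t u := by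
  induction h with
  | refl => exact TauSeq.refl _
  | step h1 h2 _ ih => exact TauSeq.step h1 (himp _ h2) ih

/-- One matching half of the bisimulation property. -/
lemma half {G : BPA V Act} {τ : Act} {T : Transducer Q V}
    (hnfc : T.IsNFC) (hcons : ConsistentWith T G τ)
    {α β : List V} (hαβ : T.out T.q0 α = T.out T.q0 β)
    {a : Act} {α' : List V} (h : G.tr α a α') :
    (a = τ ∧ T.out T.q0 α' = T.out T.q0 β) ∨
    ∃ βk β', TauSeq G.tr τ (fun u v => T.out T.q0 u = T.out T.q0 v) α β βk ∧
      G.tr βk a β' ∧ T.out T.q0 α' = T.out T.q0 β' := by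
  have hbα : BigStep G τ T T.q0 α a (T.out T.q0 α') :=
    Or.inr ⟨α, α', ConstTauSeq.refl α, h, rfl⟩
  have happrox : TApprox G τ T T.q0 α β :=
    tapprox_trans (approx_out hnfc hcons α)
      (hαβ ▸ tapprox_symm (approx_out hnfc hcons β))
  rcases (happrox a _).1 hbα with ⟨ha, he⟩ | ⟨βk, β', hseq, htr, he⟩
  · exact Or.inl ⟨ha, he⟩
  · exact Or.inr ⟨βk, β', tauseq_of_cts hseq hαβ.symm, htr, he⟩

end Lemma42Aux

/-- Lemma 4.2(2): if an nfc-transducer is consistent with a BPA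
system `G`, then `≡^T` is a branching bisimulation in `L_G`; consequently
`T(α) = T(β)` implies `α ~ β` in `L_G`. -/
theorem consistent_nfc_transducer_gives_branching_bisim {Q V Act : Type}
    (G : BPA V Act) (τ : Act) (T : Transducer Q V)
    (hnfc : T.IsNFC) (hcons : ConsistentWith T G τ) :
    IsBranchingBisim G.tr τ (fun α β => T.out T.q0 α = T.out T.q0 β) ∧
    (∀ α β : List V, T.out T.q0 α = T.out T.q0 β → BBisim G.tr τ α β) := by
  open Lemma42Aux in
  have hbb : IsBranchingBisim G.tr τ (fun α β => T.out T.q0 α = T.out T.q0 β) := by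
    intro s t hB
    constructor
    · intro a s' h
      rcases Lemma42Aux.half hnfc hcons hB h with ⟨ha, he⟩ | ⟨tk, t', h1, h2, h3⟩
      · exact Or.inl ⟨ha, he⟩
      · exact Or.inr ⟨tk, t', h1, h2, h3⟩
    · intro a t' h
      rcases Lemma42Aux.half hnfc hcons hB.symm h with ⟨ha, he⟩ | ⟨sk, s', h1, h2, h3⟩
      · exact Or.inl ⟨ha, he.symm⟩
      · exact Or.inr ⟨sk, s',
          Lemma42Aux.tauseq_mono h1 (fun x hx => hx.symm), h2, h3.symm⟩
  exact ⟨hbb, fun α β h => ⟨_, hbb, h⟩⟩
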